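/- A 3×3 Hermitian matrix A is positive definite if and only if a₁₁ + a₂₂ > 0, P₁₂ > 0, and det A > 0, where P₁₂ = a₁₁a₂₂ − |a₁₂|². -/

import Mathlib

open scoped ComplexOrder
open Complex ComplexConjugate Matrix

private lemma key_main (b c e x1 x2 x3 : ℂ) (r s t D : ℝ)
    (hD : (r:ℂ) * ((s:ℂ) * (t:ℂ) - e * conj e) - b * (conj b * (t:ℂ) - e * conj c)
        + c * (conj b * conj e - (s:ℂ) * conj c) = (D:ℂ)) :
    ((r * (r * s - normSq b) : ℝ) : ℂ) *
      (conj x1 * ((r:ℂ) * x1 + b * x2 + c * x3)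
        + conj x2 * (conj b * x1 + (s:ℂ) * x2 + e * x3)
        + conj x3 * (conj c * x1 + conj e * x2 + (t:ℂ) * x3))
    = (((r * s - normSq b) * normSq ((r:ℂ) * x1 + b * x2 + c * x3)
        + normSq (((r * s - normSq b : ℝ) : ℂ) * x2 + ((r:ℂ) * e - conj b * c) * x3)
        + r * D * normSq x3 : ℝ) : ℂ) := by
  push_cast
  rw [Complex.normSq_eq_conj_mul_self, Complex.normSq_eq_conj_mul_self,
    Complex.normSq_eq_conj_mul_self, Complex.normSq_eq_conj_mul_self]
  simp only [map_add, _root_.map_mul, map_sub, Complex.conj_conj, Complex.conj_ofReal]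
  linear_combination ((r:ℂ) * (conj x3 * x3)) * hD

theorem posDef_iff_crit_iii (A : Matrix (Fin 3) (Fin 3) ℂ) (hA : A.IsHermitian) :
    A.PosDef ↔
      (0 < (A 0 0).re + (A 1 1).re ∧ 0 < ((A 0 0).re * (A 1 1).re - Complex.normSq (A 0 1))) ∧ 0 < A.det.re := by
  have hb : A 1 0 = starRingEnd ℂ (A 0 1) := (hA.apply 1 0).symm
  have hc : A 2 0 = starRingEnd ℂ (A 0 2) := (hA.apply 2 0).symm
  have he : A 2 1 = starRingEnd ℂ (A 1 2) := (hA.apply 2 1).symm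
  have ha0 : (A 0 0).im = 0 := Complex.conj_eq_iff_im.mp (hA.apply 0 0)
  have hd0 : (A 1 1).im = 0 := Complex.conj_eq_iff_im.mp (hA.apply 1 1)
  have hf0 : (A 2 2).im = 0 := Complex.conj_eq_iff_im.mp (hA.apply 2 2)
  have haR : A 0 0 = ((A 0 0).re : ℂ) := by
    rw [← Complex.re_add_im (A 0 0), ha0]; simp
  have hdR : A 1 1 = ((A 1 1).re : ℂ) := by
    rw [← Complex.re_add_im (A 1 1), hd0]; simp
  have hfR : A 2 2 = ((A 2 2).re : ℂ) := by
    rw [← Complex.re_add_im (A 2 2), hf0]; simp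
  have hdetR : A.det = (A.det.re : ℂ) := by
    have h : star A.det = A.det := by rw [← Matrix.det_conjTranspose, hA]
    have h0 : A.det.im = 0 := Complex.conj_eq_iff_im.mp h
    rw [← Complex.re_add_im A.det, h0]; simp
  have hdet3 : A.det =
      A 0 0 * (A 1 1 * A 2 2 - A 1 2 * starRingEnd ℂ (A 1 2))
      - A 0 1 * (starRingEnd ℂ (A 0 1) * A 2 2 - A 1 2 * starRingEnd ℂ (A 0 2))
      + A 0 2 * (starRingEnd ℂ (A 0 1) * starRingEnd ℂ (A 1 2)
          - A 1 1 * starRingEnd ℂ (A 0 2)) := by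
    rw [Matrix.det_fin_three, hb, hc, he]; ring
  have hform : ∀ x : Fin 3 → ℂ, star x ⬝ᵥ A *ᵥ x =
      starRingEnd ℂ (x 0) * (A 0 0 * x 0 + A 0 1 * x 1 + A 0 2 * x 2)
      + starRingEnd ℂ (x 1) * (A 1 0 * x 0 + A 1 1 * x 1 + A 1 2 * x 2)
      + starRingEnd ℂ (x 2) * (A 2 0 * x 0 + A 2 1 * x 1 + A 2 2 * x 2) := by
    intro x; simp [dotProduct, Matrix.mulVec, Fin.sum_univ_three]
  constructor
  · intro h
    have hdet : 0 < A.det.re := by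
      have := h.det_pos
      rw [Complex.lt_def] at this
      simpa using this.1
    have h1 : 0 < (A 0 0).re := by
      have h0 := h.dotProduct_mulVec_pos (x := ![1, 0, 0]) (by
        intro hcon; have := congrFun hcon 0; simp at this)
      rw [hform] at h0
      simp [Complex.lt_def] at h0
      simpa using h0.1
    have h2 : 0 < (A 1 1).re := by
      have h0 := h.dotProduct_mulVec_pos (x := ![0, 1, 0]) (by
        intro hcon; have := congrFun hcon 1; simp at this)
      rw [hform] at h0
      simp [Complex.lt_def] at h0
      simpa using h0.1
    have hP : 0 < (A 0 0).re * (A 1 1).re - Complex.normSq (A 0 1) := by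
      have hne : A 0 0 ≠ 0 := by
        rw [haR]
        exact_mod_cast ne_of_gt h1
      have h0 := h.dotProduct_mulVec_pos (x := ![-(A 0 1), A 0 0, 0]) (by
        intro hcon; have := congrFun hcon 1; simp at this; exact hne this)
      rw [hform] at h0
      have hval : starRingEnd ℂ (-(A 0 1)) * (A 0 0 * -(A 0 1) + A 0 1 * A 0 0 + A 0 2 * 0)
          + starRingEnd ℂ (A 0 0) * (A 1 0 * -(A 0 1) + A 1 1 * A 0 0 + A 1 2 * 0)
          + starRingEnd ℂ (0 : ℂ) * (A 2 0 * -(A 0 1) + A 2 1 * A 0 0 + A 2 2 * 0)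
          = (((A 0 0).re * ((A 0 0).re * (A 1 1).re - Complex.normSq (A 0 1)) : ℝ) : ℂ) := by
        rw [hb, haR, hdR]
        push_cast [Complex.normSq_eq_conj_mul_self]
        simp only [map_zero, map_neg, Complex.conj_ofReal, Complex.ofReal_re]
        ring
      simp only [Matrix.cons_val_zero, Matrix.cons_val_one, Matrix.head_cons,
        Matrix.cons_val_two, Matrix.tail_cons] at h0
      rw [hval, Complex.zero_lt_real] at h0
      nlinarith
    exact ⟨⟨by linarith, hP⟩, hdet⟩
  · rintro ⟨⟨hsum, hP⟩, hdet⟩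
    have ha : 0 < (A 0 0).re := by nlinarith [Complex.normSq_nonneg (A 0 1)]
    have hd : 0 < (A 1 1).re := by nlinarith [Complex.normSq_nonneg (A 0 1)]
    refine Matrix.PosDef.of_dotProduct_mulVec_pos hA (fun x hx => ?_)
    have hD : ((A 0 0).re : ℂ) * (((A 1 1).re : ℂ) * ((A 2 2).re : ℂ) - A 1 2 * conj (A 1 2))
        - A 0 1 * (conj (A 0 1) * ((A 2 2).re : ℂ) - A 1 2 * conj (A 0 2))
        + A 0 2 * (conj (A 0 1) * conj (A 1 2) - ((A 1 1).re : ℂ) * conj (A 0 2))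
        = ((A.det.re : ℝ) : ℂ) := by
      rw [← haR, ← hdR, ← hfR]
      linear_combination hdetR - hdet3
    have main := key_main (A 0 1) (A 0 2) (A 1 2) (x 0) (x 1) (x 2)
      (A 0 0).re (A 1 1).re (A 2 2).re A.det.re hD
    have hform' : star x ⬝ᵥ A *ᵥ x =
        conj (x 0) * (((A 0 0).re : ℂ) * x 0 + A 0 1 * x 1 + A 0 2 * x 2)
        + conj (x 1) * (conj (A 0 1) * x 0 + ((A 1 1).re : ℂ) * x 1 + A 1 2 * x 2)
        + conj (x 2) * (conj (A 0 2) * x 0 + conj (A 1 2) * x 1 + ((A 2 2).re : ℂ) * x 2) := by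
      rw [hform, hb, hc, he, haR, hdR, hfR]
      simp only [Complex.ofReal_re]
    have hrP : 0 < (A 0 0).re * ((A 0 0).re * (A 1 1).re - Complex.normSq (A 0 1)) :=
      mul_pos ha hP
    have hSpos : 0 < ((A 0 0).re * (A 1 1).re - Complex.normSq (A 0 1))
          * normSq (((A 0 0).re : ℂ) * x 0 + A 0 1 * x 1 + A 0 2 * x 2)
        + normSq ((((A 0 0).re * (A 1 1).re - Complex.normSq (A 0 1) : ℝ) : ℂ) * x 1
            + (((A 0 0).re : ℂ) * A 1 2 - conj (A 0 1) * A 0 2) * x 2)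
        + (A 0 0).re * A.det.re * normSq (x 2) := by
      rcases eq_or_ne (x 2) 0 with h3 | h3
      · rcases eq_or_ne (x 1) 0 with h2 | h2
        · have h1 : x 0 ≠ 0 := by
            intro h1; apply hx; funext i; fin_cases i <;> assumption
          have hu0 : ((A 0 0).re : ℂ) * x 0 + A 0 1 * x 1 + A 0 2 * x 2
              = ((A 0 0).re : ℂ) * x 0 := by rw [h2, h3]; ring
          rw [hu0, h2, h3]
          have h4 : 0 < normSq (((A 0 0).re : ℂ) * x 0) := by
            rw [Complex.normSq_mul, Complex.normSq_ofReal]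
            exact mul_pos (by positivity) (Complex.normSq_pos.mpr h1)
          simp only [mul_zero, add_zero, Complex.normSq_zero]
          nlinarith [mul_pos hP h4]
        · have hv0 : (((A 0 0).re * (A 1 1).re - Complex.normSq (A 0 1) : ℝ) : ℂ) * x 1
              + (((A 0 0).re : ℂ) * A 1 2 - conj (A 0 1) * A 0 2) * x 2
              = (((A 0 0).re * (A 1 1).re - Complex.normSq (A 0 1) : ℝ) : ℂ) * x 1 := by
            rw [h3]; ring
          rw [hv0, h3]
          have h4 : 0 < normSq ((((A 0 0).re * (A 1 1).re - Complex.normSq (A 0 1) : ℝ) : ℂ) * x 1) := by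
            rw [Complex.normSq_mul, Complex.normSq_ofReal]
            exact mul_pos (by positivity) (Complex.normSq_pos.mpr h2)
          simp only [Complex.normSq_zero, mul_zero, add_zero]
          nlinarith [mul_nonneg hP.le (Complex.normSq_nonneg (((A 0 0).re : ℂ) * x 0 + A 0 1 * x 1)), h4]
      · have h4 : 0 < normSq (x 2) := Complex.normSq_pos.mpr h3
        nlinarith [Complex.normSq_nonneg (((A 0 0).re : ℂ) * x 0 + A 0 1 * x 1 + A 0 2 * x 2),
          Complex.normSq_nonneg ((((A 0 0).re * (A 1 1).re - Complex.normSq (A 0 1) : ℝ) : ℂ) * x 1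
            + (((A 0 0).re : ℂ) * A 1 2 - conj (A 0 1) * A 0 2) * x 2),
          mul_pos (mul_pos ha hdet) h4]
    have hQ : star x ⬝ᵥ A *ᵥ x =
        (((((A 0 0).re * (A 1 1).re - Complex.normSq (A 0 1))
            * normSq (((A 0 0).re : ℂ) * x 0 + A 0 1 * x 1 + A 0 2 * x 2)
          + normSq ((((A 0 0).re * (A 1 1).re - Complex.normSq (A 0 1) : ℝ) : ℂ) * x 1
              + (((A 0 0).re : ℂ) * A 1 2 - conj (A 0 1) * A 0 2) * x 2)
          + (A 0 0).re * A.det.re * normSq (x 2))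
          / ((A 0 0).re * ((A 0 0).re * (A 1 1).re - Complex.normSq (A 0 1))) : ℝ) : ℂ) := by
      have hne : (((A 0 0).re * ((A 0 0).re * (A 1 1).re - Complex.normSq (A 0 1)) : ℝ) : ℂ) ≠ 0 := by
        exact_mod_cast ne_of_gt hrP
      rw [hform', Complex.ofReal_div, eq_div_iff hne]
      linear_combination main
    rw [hQ]
    exact Complex.zero_lt_real.mpr (div_pos hSpos hrP)
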